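/- arXiv:1403.5539 — 4 statements merged into one kernel-verified Lean document; each statement's English description precedes it below -/
import Mathlib

section
/- Let (Ω, ℱ, P) be a probability space, X : Ω → E and Z, Z' : Ω → F random elements with values in measurable spaces E and F. Assume that X and Z are independent, that Z' is independent of the pair (X, Z), and that Z' has the same distribution as Z. Let f : E × F → ℝ be measurable such that Y = f(X, Z) is square-integrable, and set Y^X = f(X, Z'). Then Var(E[Y | σ(X)]) = Cov(Y, Y^X). -/
open MeasureTheory ProbabilityTheory

/-- Covariance of two real random variables. -/
noncomputable def cov {Ω : Type*} [MeasurableSpace Ω] (Y Y' : Ω → ℝ) (P : Measure Ω) : ℝ :=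
  ∫ ω, (Y ω - ∫ a, Y a ∂P) * (Y' ω - ∫ a, Y' a ∂P) ∂P

private lemma variance_congr_ae {Ω : Type*} [MeasurableSpace Ω] {μ : Measure Ω} {A B : Ω → ℝ}
    (h : A =ᵐ[μ] B) : variance A μ = variance B μ := by
  have hm : ∫ a, A a ∂μ = ∫ a, B a ∂μ := integral_congr_ae h
  unfold ProbabilityTheory.variance ProbabilityTheory.evariance
  congr 1
  apply lintegral_congr_ae
  filter_upwards [h] with ω hω
  rw [hω, hm]

private lemma cov_expand {Ω : Type*} [MeasurableSpace Ω] {P : Measure Ω} [IsProbabilityMeasure P]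
    {Y Y' : Ω → ℝ} (hY : Integrable Y P) (hY' : Integrable Y' P)
    (hmul : Integrable (fun ω => Y ω * Y' ω) P) :
    cov Y Y' P = ∫ ω, Y ω * Y' ω ∂P - (∫ ω, Y ω ∂P) * (∫ ω, Y' ω ∂P) := by
  set a := ∫ ω, Y ω ∂P with ha
  set b := ∫ ω, Y' ω ∂P with hb
  have h1 : ∀ ω, (Y ω - a) * (Y' ω - b) = (Y ω * Y' ω - Y ω * b) - (a * Y' ω - a * b) := by
    intro ω; ring
  unfold cov
  rw [← ha, ← hb]
  simp_rw [h1]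
  have i1 : Integrable (fun ω => Y ω * Y' ω - Y ω * b) P := hmul.sub (hY.mul_const b)
  have i2 : Integrable (fun ω => a * Y' ω - a * b) P :=
    (hY'.const_mul a).sub (integrable_const (a * b))
  rw [integral_sub i1 i2, integral_sub hmul (hY.mul_const b),
    integral_sub (hY'.const_mul a) (integrable_const (a * b)),
    integral_mul_const, integral_const_mul, integral_const]
  simp [← ha, ← hb]

/-- **Sobol pick-and-freeze lemma.** If `X` and `Z` are independent, `Z'` is independent of the
pair `(X, Z)` and has the same distribution as `Z`, and `Y = f (X, Z)` is square-integrable, then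
`Var (E[Y | σ(X)]) = Cov (Y, Yˣ)` where `Yˣ = f (X, Z')`. -/
theorem stmt_0 {Ω E F : Type*} [MeasurableSpace Ω] {P : Measure Ω} [IsProbabilityMeasure P]
    [MeasurableSpace E] [MeasurableSpace F]
    (X : Ω → E) (Z Z' : Ω → F)
    (hX : Measurable X) (hZ : Measurable Z) (hZ' : Measurable Z')
    (hXZ : IndepFun X Z P)
    (hZ'XZ : IndepFun Z' (fun ω => (X ω, Z ω)) P)
    (hZ'Z : IdentDistrib Z' Z P P)
    (f : E × F → ℝ) (hf : Measurable f)
    (Y : Ω → ℝ) (hY : Y = fun ω => f (X ω, Z ω))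
    (YX : Ω → ℝ) (hYX : YX = fun ω => f (X ω, Z' ω))
    (hY2 : MemLp Y 2 P) :
    variance (P[Y | MeasurableSpace.comap X inferInstance]) P = cov Y YX P := by
  subst hY
  subst hYX
  set μ := P.map X with hμ
  set ν := P.map Z with hν
  have hνP : IsProbabilityMeasure ν := Measure.isProbabilityMeasure_map hZ.aemeasurable
  have hμP : IsProbabilityMeasure μ := Measure.isProbabilityMeasure_map hX.aemeasurable
  have hπ : P.map (fun ω => (X ω, Z ω)) = μ.prod ν :=
    (indepFun_iff_map_prod_eq_prod_map_map hX.aemeasurable hZ.aemeasurable).mp hXZ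
  have hZ'map : P.map Z' = ν := hZ'Z.map_eq
  have htriple : P.map (fun ω => ((X ω, Z ω), Z' ω)) = (μ.prod ν).prod ν := by
    rw [(indepFun_iff_map_prod_eq_prod_map_map ((hX.prodMk hZ).aemeasurable)
      hZ'.aemeasurable).mp hZ'XZ.symm, hπ, hZ'map]
  have hXZ'indep : IndepFun X Z' P :=
    hZ'XZ.symm.comp (measurable_fst (α := E) (β := F)) measurable_id
  have hπ' : P.map (fun ω => (X ω, Z' ω)) = μ.prod ν := by
    rw [(indepFun_iff_map_prod_eq_prod_map_map hX.aemeasurable hZ'.aemeasurable).mp hXZ'indep,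
      hZ'map]
  -- integrability transfers
  have hfπ2 : MemLp f 2 (μ.prod ν) := by
    rw [← hπ]
    exact (memLp_map_measure_iff hf.aestronglyMeasurable (hX.prodMk hZ).aemeasurable).mpr hY2
  have hfπ1 : Integrable f (μ.prod ν) := hfπ2.integrable one_le_two
  have hYint : Integrable (fun ω => f (X ω, Z ω)) P := hY2.integrable one_le_two
  have hYX2 : MemLp (fun ω => f (X ω, Z' ω)) 2 P := by
    have : MemLp f 2 (P.map (fun ω => (X ω, Z' ω))) := by rw [hπ']; exact hfπ2
    exact (memLp_map_measure_iff hf.aestronglyMeasurable (hX.prodMk hZ').aemeasurable).mp this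
  have hYXint : Integrable (fun ω => f (X ω, Z' ω)) P := hYX2.integrable one_le_two
  -- the conditional mean function
  set g : E → ℝ := fun x => ∫ z, f (x, z) ∂ν with hg
  have hgm : StronglyMeasurable g := hf.stronglyMeasurable.integral_prod_right'
  have hgint : Integrable g μ := hfπ1.integral_prod_left
  have hgXint : Integrable (fun ω => g (X ω)) P :=
    (integrable_map_measure hgm.aestronglyMeasurable hX.aemeasurable).mp hgint
  have hm : MeasurableSpace.comap X inferInstance ≤ ‹MeasurableSpace Ω› := hX.comap_le
  -- identification of the conditional expectation
  have hcond : (fun ω => g (X ω)) =ᵐ[P]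
      P[(fun ω => f (X ω, Z ω)) | MeasurableSpace.comap X inferInstance] := by
    refine ae_eq_condExp_of_forall_setIntegral_eq hm hYint
      (fun s _ _ => hgXint.integrableOn) (fun s hs _ => ?_)
      ((hgm.measurable.comp
        (measurable_iff_comap_le.2 le_rfl)).stronglyMeasurable.aestronglyMeasurable)
    obtain ⟨A, hA, rfl⟩ := hs
    have h1 : ∫ ω in X ⁻¹' A, g (X ω) ∂P = ∫ x in A, g x ∂μ := by
      rw [hμ, setIntegral_map hA hgm.aestronglyMeasurable hX.aemeasurable]
    have h2 : ∫ ω in X ⁻¹' A, f (X ω, Z ω) ∂P = ∫ p in A ×ˢ Set.univ, f p ∂(μ.prod ν) := by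
      rw [← hπ, setIntegral_map (hA.prod MeasurableSet.univ) hf.aestronglyMeasurable
        (hX.prodMk hZ).aemeasurable]
      have : X ⁻¹' A = (fun ω => (X ω, Z ω)) ⁻¹' (A ×ˢ Set.univ) := by
        ext ω; simp
      rw [this]
    rw [h1, h2, setIntegral_prod _ hfπ1.integrableOn]
    simp [hg]
  -- integrability of the product
  have hmul : Integrable (fun ω => f (X ω, Z ω) * f (X ω, Z' ω)) P := by
    have h := L2.integrable_inner (𝕜 := ℝ) (hY2.toLp _) (hYX2.toLp _)
    refine h.congr ?_
    filter_upwards [hY2.coeFn_toLp, hYX2.coeFn_toLp] with ω h1 h2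
    simp [h1, h2, RCLike.inner_apply, mul_comm]
  have hH : Integrable (fun q : (E × F) × F => f q.1 * f (q.1.1, q.2)) ((μ.prod ν).prod ν) := by
    rw [← htriple]
    refine (integrable_map_measure ?_ ?_).mpr hmul
    · exact ((hf.comp measurable_fst).mul
        (hf.comp ((measurable_fst.comp measurable_fst).prodMk measurable_snd))).aestronglyMeasurable
    · exact ((hX.prodMk hZ).prodMk hZ').aemeasurable
  have hK : Integrable (fun p : E × F => f p * g p.1) (μ.prod ν) := by
    have h := hH.integral_prod_left
    simpa only [integral_const_mul] using h
  have hgg : Integrable (fun x => g x * g x) μ := by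
    have h := hK.integral_prod_left
    simpa only [integral_mul_const] using h
  have hgmem : MemLp g 2 μ :=
    (memLp_two_iff_integrable_sq hgm.aestronglyMeasurable).mpr (by simpa [sq] using hgg)
  have hgX2 : MemLp (fun ω => g (X ω)) 2 P :=
    (memLp_map_measure_iff hgm.aestronglyMeasurable hX.aemeasurable).mp hgmem
  -- mean identifications
  have hEY : ∫ ω, f (X ω, Z ω) ∂P = ∫ p, f p ∂(μ.prod ν) := by
    rw [← hπ, integral_map (hX.prodMk hZ).aemeasurable hf.aestronglyMeasurable]
  have hEYX : ∫ ω, f (X ω, Z' ω) ∂P = ∫ p, f p ∂(μ.prod ν) := by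
    rw [← hπ', integral_map (hX.prodMk hZ').aemeasurable hf.aestronglyMeasurable]
  have hfub : ∫ p, f p ∂(μ.prod ν) = ∫ x, g x ∂μ := integral_prod f hfπ1
  have hEgX : ∫ ω, g (X ω) ∂P = ∫ x, g x ∂μ := by
    rw [hμ, integral_map hX.aemeasurable hgm.aestronglyMeasurable]
  have hggm : AEStronglyMeasurable (fun x => g x * g x) μ := (hgm.mul hgm).aestronglyMeasurable
  have hEgX2 : ∫ ω, g (X ω) * g (X ω) ∂P = ∫ x, g x * g x ∂μ :=
    (integral_map hX.aemeasurable hggm).symm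
  have hEmul : ∫ ω, f (X ω, Z ω) * f (X ω, Z' ω) ∂P = ∫ x, g x * g x ∂μ :=
    calc ∫ ω, f (X ω, Z ω) * f (X ω, Z' ω) ∂P
        = ∫ q, f q.1 * f (q.1.1, q.2) ∂((μ.prod ν).prod ν) := by
          have hHm : AEStronglyMeasurable (fun q : (E × F) × F => f q.1 * f (q.1.1, q.2))
              (P.map (fun ω => ((X ω, Z ω), Z' ω))) :=
            ((hf.comp measurable_fst).mul (hf.comp
              ((measurable_fst.comp measurable_fst).prodMk
                measurable_snd))).aestronglyMeasurable
          rw [← htriple]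
          exact (integral_map ((hX.prodMk hZ).prodMk hZ').aemeasurable hHm).symm
      _ = ∫ p, f p * g p.1 ∂(μ.prod ν) := by
          rw [integral_prod _ hH]
          simp only [integral_const_mul]
          rfl
      _ = ∫ x, g x * g x ∂μ := by
          rw [integral_prod _ hK]
          simp only [integral_mul_const]
          rfl
  -- conclude
  rw [variance_congr_ae hcond.symm, variance_eq_sub hgX2,
    cov_expand hYint hYXint hmul, hEmul, hEY, hEYX, hfub]
  have hsq : ∫ ω, g (X ω) ^ 2 ∂P = ∫ x, g x * g x ∂μ := by
    rw [← hEgX2]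
    congr 1
    ext ω
    rw [sq]
  simp only [Pi.pow_apply]
  rw [hsq, hEgX]
  ring
end

section
/- Let (Ω, ℱ, P) be a probability space, X : Ω → E and Z, Z' : Ω → F random elements with X and Z independent, Z' independent of the pair (X, Z), and Z' distributed as Z. Let f : E × F → ℝ be measurable such that Y = f(X, Z) is square-integrable with Var(Y) ≠ 0, and set Y^X = f(X, Z'). Then the Sobol index S^X = Var(E[Y | σ(X)]) / Var(Y) satisfies S^X = Cov(Y, Y^X) / Var(Y). -/
open MeasureTheory ProbabilityTheory

lemma aux_integrable_mul {Ω : Type*} [MeasurableSpace Ω] {P : Measure Ω} {u v : Ω → ℝ}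
    (hu : MemLp u 2 P) (hv : MemLp v 2 P) : Integrable (fun ω => u ω * v ω) P := by
  have h := hv.smul (p := 2) (q := 2) (r := 1) hu
    (hpqr := ⟨by simp [ENNReal.inv_two_add_inv_two]⟩)
  exact memLp_one_iff_integrable.1 h

lemma aux_cov_eq {Ω : Type*} [MeasurableSpace Ω] {P : Measure Ω} [IsProbabilityMeasure P]
    {u v : Ω → ℝ} (hu : MemLp u 2 P) (hv : MemLp v 2 P) :
    cov u v P = (∫ ω, u ω * v ω ∂P) - (∫ ω, u ω ∂P) * (∫ ω, v ω ∂P) := by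
  have hu1 : Integrable u P := hu.integrable one_le_two
  have hv1 : Integrable v P := hv.integrable one_le_two
  have hm : Integrable (fun ω => u ω * v ω) P := aux_integrable_mul hu hv
  set a := ∫ ω, u ω ∂P with ha
  set b := ∫ ω, v ω ∂P with hb
  have hcov : cov u v P = ∫ ω, (u ω * v ω - (a * v ω + (b * u ω - a * b))) ∂P := by
    unfold cov
    congr 1
    ext ω
    ring
  have hg1 : Integrable (fun ω => a * v ω) P := hv1.const_mul a
  have hg2 : Integrable (fun ω => b * u ω - a * b) P := (hu1.const_mul b).sub (integrable_const _)
  have hg' : Integrable (fun ω => a * v ω + (b * u ω - a * b)) P := hg1.add hg2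
  rw [hcov, integral_sub hm hg', integral_add hg1 hg2,
    integral_sub (hu1.const_mul b) (integrable_const _),
    integral_const_mul, integral_const_mul, integral_const]
  simp only [measure_univ, ENNReal.toReal_one, smul_eq_mul, one_mul, probReal_univ]
  rw [← ha, ← hb]
  ring

lemma aux_variance_congr {Ω : Type*} [MeasurableSpace Ω] {P : Measure Ω} {u v : Ω → ℝ}
    (h : u =ᵐ[P] v) : variance u P = variance v P := by
  unfold ProbabilityTheory.variance ProbabilityTheory.evariance
  rw [integral_congr_ae h]
  congr 1
  apply lintegral_congr_ae
  filter_upwards [h] with ω hω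
  rw [hω]

lemma aux_memℒp_marginal {E F : Type*} [MeasurableSpace E] [MeasurableSpace F]
    {μ : Measure E} {ν : Measure F} [SFinite μ] [IsProbabilityMeasure ν]
    {f : E × F → ℝ} (hf : Measurable f) (h2 : MemLp f 2 (μ.prod ν)) :
    MemLp (fun x => ∫ z, f (x, z) ∂ν) 2 μ := by
  have hsm : StronglyMeasurable (fun x => ∫ z, f (x, z) ∂ν) :=
    hf.stronglyMeasurable.integral_prod_right'
  have hfsq : Integrable (fun p => f p ^ 2) (μ.prod ν) :=
    (memLp_two_iff_integrable_sq hf.aestronglyMeasurable).1 h2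
  rw [memLp_two_iff_integrable_sq hsm.aestronglyMeasurable]
  refine Integrable.mono' hfsq.integral_prod_left ((hsm.pow 2).aestronglyMeasurable) ?_
  filter_upwards [hfsq.prod_right_ae] with x hx
  have hmem : MemLp (fun z => f (x, z)) 2 ν :=
    (memLp_two_iff_integrable_sq (hf.comp measurable_prodMk_left).aestronglyMeasurable).2 hx
  have h0 := variance_nonneg (fun z => f (x, z)) ν
  rw [variance_eq_sub hmem] at h0
  have hle : (∫ z, f (x, z) ∂ν) ^ 2 ≤ ∫ z, f (x, z) ^ 2 ∂ν := by
    simp only [Pi.pow_apply] at h0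
    linarith
  calc ‖(∫ z, f (x, z) ∂ν) ^ 2‖ = (∫ z, f (x, z) ∂ν) ^ 2 := by
        rw [Real.norm_eq_abs, abs_of_nonneg (sq_nonneg _)]
    _ ≤ ∫ z, f (x, z) ^ 2 ∂ν := hle

/-- If `X` and `Z` are independent, `Z'` is independent of the pair `(X, Z)` and distributed as
`Z`, and `Y = f (X, Z)` is square-integrable with `Var Y ≠ 0`, then the Sobol index
`Sˣ = Var (E[Y | σ(X)]) / Var Y` satisfies `Sˣ = Cov (Y, Yˣ) / Var Y` with `Yˣ = f (X, Z')`. -/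
theorem stmt_1 {Ω E F : Type*} [MeasurableSpace Ω] {P : Measure Ω} [IsProbabilityMeasure P]
    [MeasurableSpace E] [MeasurableSpace F]
    (X : Ω → E) (Z Z' : Ω → F)
    (hX : Measurable X) (hZ : Measurable Z) (hZ' : Measurable Z')
    (hXZ : IndepFun X Z P)
    (hZ'XZ : IndepFun Z' (fun ω => (X ω, Z ω)) P)
    (hZ'Z : IdentDistrib Z' Z P P)
    (f : E × F → ℝ) (hf : Measurable f)
    (Y : Ω → ℝ) (hY : Y = fun ω => f (X ω, Z ω))
    (YX : Ω → ℝ) (hYX : YX = fun ω => f (X ω, Z' ω))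
    (hY2 : MemLp Y 2 P) (hVar : variance Y P ≠ 0)
    (SX : ℝ) (hSX : SX = variance (P[Y | MeasurableSpace.comap X inferInstance]) P / variance Y P) :
    SX = cov Y YX P / variance Y P := by
  subst hY hYX hSX
  have hm : MeasurableSpace.comap X inferInstance ≤ ‹MeasurableSpace Ω› := hX.comap_le
  set μX := P.map X with hμX
  set μZ := P.map Z with hμZ
  haveI hPX : IsProbabilityMeasure μX := Measure.isProbabilityMeasure_map hX.aemeasurable
  haveI hPZ : IsProbabilityMeasure μZ := Measure.isProbabilityMeasure_map hZ.aemeasurable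
  have hpair : Measurable fun ω => (X ω, Z ω) := hX.prodMk hZ
  have hpair' : Measurable fun ω => (X ω, Z' ω) := hX.prodMk hZ'
  have hlaw1 : P.map (fun ω => (X ω, Z ω)) = μX.prod μZ :=
    (indepFun_iff_map_prod_eq_prod_map_map hX.aemeasurable hZ.aemeasurable).1 hXZ
  have hZ'map : P.map Z' = μZ := hZ'Z.map_eq
  have hXZ' : IndepFun X Z' P := by
    have := hZ'XZ.comp measurable_id (measurable_fst : Measurable (Prod.fst : E × F → E))
    exact this.symm
  have hlaw3 : P.map (fun ω => (X ω, Z' ω)) = μX.prod μZ := by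
    rw [(indepFun_iff_map_prod_eq_prod_map_map hX.aemeasurable hZ'.aemeasurable).1 hXZ', hZ'map]
  have hlaw2 : P.map (fun ω => ((X ω, Z ω), Z' ω)) = (μX.prod μZ).prod μZ := by
    rw [(indepFun_iff_map_prod_eq_prod_map_map hpair.aemeasurable hZ'.aemeasurable).1 hZ'XZ.symm,
      hlaw1, hZ'map]
  -- f is L² for the product law
  have hfL2 : MemLp f 2 (μX.prod μZ) := by
    rw [← hlaw1]
    exact (memLp_map_measure_iff hf.aestronglyMeasurable hpair.aemeasurable).2 hY2
  have hfInt : Integrable f (μX.prod μZ) := hfL2.integrable one_le_two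
  -- the regression function g
  set g : E → ℝ := fun x => ∫ z, f (x, z) ∂μZ with hg_def
  have hg_sm : StronglyMeasurable g := hf.stronglyMeasurable.integral_prod_right'
  have hgL2 : MemLp g 2 μX := aux_memℒp_marginal hf hfL2
  have hgInt : Integrable g μX := hfInt.integral_prod_left
  have hgXL2 : MemLp (fun ω => g (X ω)) 2 P :=
    (memLp_map_measure_iff hg_sm.aestronglyMeasurable hX.aemeasurable).1 hgL2
  have hgXInt : Integrable (fun ω => g (X ω)) P :=
    (integrable_map_measure hg_sm.aestronglyMeasurable hX.aemeasurable).1 hgInt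
  have hYint : Integrable (fun ω => f (X ω, Z ω)) P := hY2.integrable one_le_two
  -- identify the conditional expectation
  have hgX_meas : StronglyMeasurable[MeasurableSpace.comap X inferInstance] fun ω => g (X ω) :=
    hg_sm.comp_measurable (Measurable.of_comap_le le_rfl)
  have key : ∀ A : Set E, MeasurableSet A →
      ∫ ω in X ⁻¹' A, g (X ω) ∂P = ∫ ω in X ⁻¹' A, f (X ω, Z ω) ∂P := by
    intro A hA
    have h1 : ∫ ω in X ⁻¹' A, g (X ω) ∂P = ∫ x in A, g x ∂μX := by
      rw [hμX, setIntegral_map hA hg_sm.aestronglyMeasurable hX.aemeasurable]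
    have hpre : X ⁻¹' A = (fun ω => (X ω, Z ω)) ⁻¹' (A ×ˢ Set.univ) := by
      ext ω; simp
    have hres : (μX.prod μZ).restrict (A ×ˢ Set.univ) = (μX.restrict A).prod μZ := by
      rw [← Measure.prod_restrict, Measure.restrict_univ]
    have hint' : Integrable f ((μX.restrict A).prod μZ) := by
      rw [← hres]
      exact hfInt.restrict
    have h2 : ∫ ω in X ⁻¹' A, f (X ω, Z ω) ∂P = ∫ x in A, g x ∂μX := by
      rw [hpre, ← setIntegral_map (hA.prod MeasurableSet.univ) hf.aestronglyMeasurable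
        hpair.aemeasurable, hlaw1]
      rw [show (∫ p in A ×ˢ Set.univ, f p ∂(μX.prod μZ)) = ∫ p, f p ∂((μX.restrict A).prod μZ) by
        rw [hres]]
      rw [integral_prod f hint']
    rw [h1, h2]
  have hcond : P[(fun ω => f (X ω, Z ω))|MeasurableSpace.comap X inferInstance]
      =ᵐ[P] fun ω => g (X ω) := by
    refine (ae_eq_condExp_of_forall_setIntegral_eq hm hYint
      (fun s _ _ => hgXInt.integrableOn) ?_ hgX_meas.aestronglyMeasurable).symm
    rintro s ⟨A, hA, rfl⟩ _
    exact key A hA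
  -- moments of g ∘ X
  have hEgX : ∫ ω, g (X ω) ∂P = ∫ x, g x ∂μX := by
    rw [hμX, integral_map hX.aemeasurable hg_sm.aestronglyMeasurable]
  have hEgX2 : ∫ ω, g (X ω) ^ 2 ∂P = ∫ x, g x ^ 2 ∂μX := by
    have hsq : AEStronglyMeasurable (fun x : E => g x ^ 2) (P.map X) :=
      (hg_sm.pow 2).aestronglyMeasurable
    rw [hμX, integral_map hX.aemeasurable hsq]
  -- expectation of Y
  have hEY : ∫ ω, f (X ω, Z ω) ∂P = ∫ x, g x ∂μX := by
    rw [← integral_map hpair.aemeasurable hf.aestronglyMeasurable, hlaw1, integral_prod f hfInt]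
  -- YX is identically distributed with Y
  have hident : IdentDistrib (fun ω => f (X ω, Z' ω)) (fun ω => f (X ω, Z ω)) P P := by
    refine ⟨(hf.comp hpair').aemeasurable, (hf.comp hpair).aemeasurable, ?_⟩
    calc P.map (fun ω => f (X ω, Z' ω)) = (P.map (fun ω => (X ω, Z' ω))).map f := by
          rw [Measure.map_map hf hpair']; rfl
      _ = (P.map (fun ω => (X ω, Z ω))).map f := by rw [hlaw3, hlaw1]
      _ = P.map (fun ω => f (X ω, Z ω)) := by rw [Measure.map_map hf hpair]; rfl
  have hYX2 : MemLp (fun ω => f (X ω, Z' ω)) 2 P := hident.symm.memLp_snd hY2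
  have hEYX : ∫ ω, f (X ω, Z' ω) ∂P = ∫ x, g x ∂μX := by
    rw [hident.integral_eq, hEY]
  -- the product moment
  have hψ : Measurable fun ω => ((X ω, Z ω), Z' ω) := hpair.prodMk hZ'
  set Fp : (E × F) × F → ℝ := fun p => f p.1 * f (p.1.1, p.2) with hFp
  have hFmeas : Measurable Fp :=
    (hf.comp measurable_fst).mul
      (hf.comp ((measurable_fst.comp measurable_fst).prodMk measurable_snd))
  have hYYXint : Integrable (fun ω => f (X ω, Z ω) * f (X ω, Z' ω)) P :=
    aux_integrable_mul hY2 hYX2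
  have hFint : Integrable Fp ((μX.prod μZ).prod μZ) := by
    rw [← hlaw2]
    exact (integrable_map_measure hFmeas.aestronglyMeasurable hψ.aemeasurable).2 hYYXint
  have hprod : ∫ ω, f (X ω, Z ω) * f (X ω, Z' ω) ∂P = ∫ x, g x * g x ∂μX := by
    have e1 : ∫ ω, f (X ω, Z ω) * f (X ω, Z' ω) ∂P = ∫ p, Fp p ∂((μX.prod μZ).prod μZ) := by
      rw [← hlaw2, integral_map hψ.aemeasurable hFmeas.aestronglyMeasurable]
    rw [e1, integral_prod Fp hFint]
    simp only [hFp]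
    simp_rw [integral_const_mul]
    -- now : ∫ p, f p * ∫ z', f (p.1, z') ∂μZ ∂(μX.prod μZ) = ∫ x, g x * g x ∂μX
    have hGH : Integrable (fun p : E × F => f p * g p.1) (μX.prod μZ) := by
      have hgfst : MemLp (fun p : E × F => g p.1) 2 (μX.prod μZ) := by
        have hmapfst : (μX.prod μZ).map Prod.fst = μX := by
          simp [Measure.map_fst_prod, measure_univ]
        have := (memLp_map_measure_iff hg_sm.aestronglyMeasurable
          measurable_fst.aemeasurable (μ := μX.prod μZ)).1 (by rw [hmapfst]; exact hgL2)
        exact this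
      exact aux_integrable_mul hfL2 hgfst
    rw [integral_prod _ hGH]
    congr 1
    ext x
    simp_rw [integral_mul_const]
    rfl
  -- put everything together
  have hvar_eq : variance (P[(fun ω => f (X ω, Z ω))|MeasurableSpace.comap X inferInstance]) P
      = (∫ x, g x ^ 2 ∂μX) - (∫ x, g x ∂μX) ^ 2 := by
    rw [aux_variance_congr hcond, variance_eq_sub hgXL2]
    simp only [Pi.pow_apply]
    rw [hEgX2, hEgX]
  have hcov_eq : cov (fun ω => f (X ω, Z ω)) (fun ω => f (X ω, Z' ω)) P
      = (∫ x, g x ^ 2 ∂μX) - (∫ x, g x ∂μX) ^ 2 := by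
    rw [aux_cov_eq hY2 hYX2, hprod, hEY, hEYX]
    ring_nf
  rw [hvar_eq, hcov_eq]
end

section
/- Let X : Ω → E and X' : Ω' → E be random elements on (possibly different) probability spaces, and let Y : Ω → ℝ and Y' : Ω' → ℝ be square-integrable random variables such that the joint law of (Y, X) on ℝ × E equals the joint law of (Y', X'). Then Var(E[Y | σ(X)]) = Var(E[Y' | σ(X')]). -/
open MeasureTheory ProbabilityTheory

/-- If `(Y, X)` on `(Ω, P)` and `(Y', X')` on `(Ω', P')` have the same joint law, with `Y, Y'`
square-integrable, then `Var (E[Y | σ(X)]) = Var (E[Y' | σ(X')])`. -/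
theorem stmt_7 {Ω Ω' E : Type*} [MeasurableSpace Ω] [MeasurableSpace Ω'] [MeasurableSpace E]
    {P : Measure Ω} {P' : Measure Ω'} [IsProbabilityMeasure P] [IsProbabilityMeasure P']
    (X : Ω → E) (X' : Ω' → E) (Y : Ω → ℝ) (Y' : Ω' → ℝ)
    (hX : Measurable X) (hX' : Measurable X')
    (hY2 : MemLp Y 2 P) (hY'2 : MemLp Y' 2 P')
    (h : IdentDistrib (fun ω => (Y ω, X ω)) (fun ω => (Y' ω, X' ω)) P P') :
    variance (P[Y | MeasurableSpace.comap X inferInstance]) P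
      = variance (P'[Y' | MeasurableSpace.comap X' inferInstance]) P' := by
  have hYi : Integrable Y P := hY2.integrable one_le_two
  have hY'i : Integrable Y' P' := hY'2.integrable one_le_two
  have hswap : P.map (fun a => (X a, Y a)) = P'.map (fun a => (X' a, Y' a)) := by
    have := h.comp measurable_swap
    exact this.map_eq
  have hκ : condDistrib Y X P = condDistrib Y' X' P' := by
    rw [condDistrib, condDistrib]
    congr 1
  set g : E → ℝ := fun x => ∫ y, y ∂condDistrib Y X P x with hg
  have hgm : StronglyMeasurable g := by
    have : StronglyMeasurable (Function.uncurry fun (_ : E) (y : ℝ) => y) :=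
      measurable_snd.stronglyMeasurable
    exact this.integral_kernel_prod_right
  have h1 : P[Y | MeasurableSpace.comap X inferInstance] =ᵐ[P] fun a => g (X a) :=
    condExp_ae_eq_integral_condDistrib' hX hYi
  have h2 : P'[Y' | MeasurableSpace.comap X' inferInstance] =ᵐ[P'] fun a => g (X' a) := by
    have := condExp_ae_eq_integral_condDistrib' hX' hY'i
    simpa [hg, hκ] using this
  have hXX' : IdentDistrib X X' P P' := h.comp measurable_snd
  have hgX : IdentDistrib (fun a => g (X a)) (fun a => g (X' a)) P P' :=
    hXX'.comp hgm.measurable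
  have e1 : variance (P[Y | MeasurableSpace.comap X inferInstance]) P
      = variance (fun a => g (X a)) P :=
    (IdentDistrib.of_ae_eq
      (stronglyMeasurable_condExp.mono hX.comap_le).aemeasurable h1).variance_eq
  have e2 : variance (P'[Y' | MeasurableSpace.comap X' inferInstance]) P'
      = variance (fun a => g (X' a)) P' :=
    (IdentDistrib.of_ae_eq
      (stronglyMeasurable_condExp.mono hX'.comap_le).aemeasurable h2).variance_eq
  rw [e1, e2, hgX.variance_eq]
end

section
/- Let (X_t, Y_t)_{t ∈ ℕ} be a real-valued process with each Y_t square-integrable, and suppose the system is jointly stationary in the sense that for every t ∈ ℕ, the joint law of (Y_{t+1}, (X_1, X_2, …, X_{t+1})) equals the joint law of (Y_t, (X_0, X_1, …, X_t)). Define V_t = Var(E[Y_t | σ(X_0, …, X_t)]). Then the sequence (V_t) is nondecreasing, bounded above by Var(Y_0), and converges to sup_K V_K as t → ∞. Consequently, if Var(Y_0) ≠ 0, the projection-on-the-past sensitivity index S^X_t = V_t / Var(Y_t) converges to S^X_∞ = sup_K S^X_K. -/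
open MeasureTheory ProbabilityTheory Filter

section Aux

lemma my_variance_congr {Ω : Type*} [MeasurableSpace Ω] {P : Measure Ω} {f g : Ω → ℝ}
    (h : f =ᵐ[P] g) : variance f P = variance g P := by
  have hint : (∫ ω, f ω ∂P) = ∫ ω, g ω ∂P := integral_congr_ae h
  rw [variance, variance, evariance, evariance, hint]
  refine congrArg _ (lintegral_congr_ae ?_)
  filter_upwards [h] with ω hω
  simp only [hω]

lemma condexp_L2_props {Ω : Type*} {m m0 : MeasurableSpace Ω} (hm : m ≤ m0) {P : Measure Ω}
    [IsProbabilityMeasure P] {f : Ω → ℝ} (hf : MemLp f 2 P) :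
    MemLp (P[f|m]) 2 P ∧ ∫ ω, (P[f|m]) ω ^ 2 ∂P ≤ ∫ ω, f ω ^ 2 ∂P := by
  set G : lpMeas ℝ ℝ m 2 P := condExpL2 ℝ ℝ hm (hf.toLp f) with hG
  have hGf : ((G : Lp ℝ 2 P) : Ω → ℝ) =ᵐ[P] P[f|m] := by
    refine ae_eq_condExp_of_forall_setIntegral_eq hm (hf.integrable one_le_two) ?_ ?_ ?_
    · intro s _ hμs
      exact integrableOn_Lp_of_measure_ne_top _ one_le_two hμs.ne
    · intro s hs hμs
      rw [integral_condExpL2_eq hm (hf.toLp f) hs hμs.ne]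
      exact setIntegral_congr_ae (hm s hs) (hf.coeFn_toLp.mono fun x hx _ => hx)
    · exact lpMeas.aestronglyMeasurable G
  have hsq : ∀ (u : Lp ℝ 2 P), ∫ ω, (u : Ω → ℝ) ω ^ 2 ∂P = ‖u‖ ^ 2 := by
    intro u
    have h1 : @inner ℝ _ _ u u = ∫ ω, @inner ℝ ℝ _ ((u : Ω → ℝ) ω) ((u : Ω → ℝ) ω) ∂P :=
      L2.inner_def u u
    simp only [RCLike.inner_apply, starRingEnd_apply, star_trivial] at h1
    rw [← real_inner_self_eq_norm_sq, h1]
    congr 1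
    ext ω
    ring
  constructor
  · exact (Lp.memLp (G : Lp ℝ 2 P)).ae_eq hGf
  · have h1 : ∫ ω, (P[f|m]) ω ^ 2 ∂P = ∫ ω, ((G : Lp ℝ 2 P) : Ω → ℝ) ω ^ 2 ∂P :=
      integral_congr_ae (by filter_upwards [hGf] with ω hω; rw [hω])
    have h2 : ∫ ω, f ω ^ 2 ∂P = ∫ ω, ((hf.toLp f : Lp ℝ 2 P) : Ω → ℝ) ω ^ 2 ∂P :=
      integral_congr_ae (by filter_upwards [hf.coeFn_toLp] with ω hω; rw [hω])
    rw [h1, h2, hsq, hsq]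
    have h3 : ‖(G : Lp ℝ 2 P)‖ = ‖G‖ := rfl
    rw [h3]
    exact pow_le_pow_left₀ (norm_nonneg _) (norm_condExpL2_le hm (hf.toLp f)) 2

lemma my_variance_condexp_le {Ω : Type*} {m m0 : MeasurableSpace Ω} (hm : m ≤ m0)
    {P : Measure Ω} [IsProbabilityMeasure P] {f : Ω → ℝ} (hf : MemLp f 2 P) :
    variance (P[f|m]) P ≤ variance f P := by
  obtain ⟨hmem, hsq⟩ := condexp_L2_props hm hf
  rw [variance_eq_sub hmem, variance_eq_sub hf, integral_condExp hm]
  simp only [Pi.pow_apply]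
  exact sub_le_sub_right hsq _

lemma my_variance_condexp_mono {Ω : Type*} {m₁ m₂ m0 : MeasurableSpace Ω} (h12 : m₁ ≤ m₂)
    (hm₂ : m₂ ≤ m0) {P : Measure Ω} [IsProbabilityMeasure P] {f : Ω → ℝ}
    (hf : MemLp f 2 P) :
    variance (P[f|m₁]) P ≤ variance (P[f|m₂]) P := by
  calc variance (P[f|m₁]) P = variance (P[P[f|m₂]|m₁]) P :=
        my_variance_congr (condExp_condExp_of_le h12 hm₂).symm
    _ ≤ variance (P[f|m₂]) P :=
        my_variance_condexp_le (h12.trans hm₂) (condexp_L2_props hm₂ hf).1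

lemma variance_condexp_comap_eq {Ω E : Type*} {mΩ : MeasurableSpace Ω}
    {mE : MeasurableSpace E} {P : Measure Ω} [IsProbabilityMeasure P] {Y : Ω → ℝ} {Z : Ω → E}
    (hY : MemLp Y 2 P) (hZ : Measurable Z) :
    variance (P[Y | MeasurableSpace.comap Z mE]) P
      = variance ((P.map fun ω => (Y ω, Z ω))[(Prod.fst : ℝ × E → ℝ) |
          MeasurableSpace.comap (Prod.snd : ℝ × E → E) mE]) (P.map fun ω => (Y ω, Z ω)) := by
  set W : Ω → ℝ × E := fun ω => (Y ω, Z ω) with hW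
  have hWae : AEMeasurable W P := (hY.aestronglyMeasurable.aemeasurable).prodMk hZ.aemeasurable
  set μ : Measure (ℝ × E) := P.map W with hμ
  haveI : IsProbabilityMeasure μ := Measure.isProbabilityMeasure_map hWae
  have hm : MeasurableSpace.comap (Prod.snd : ℝ × E → E) mE ≤ Prod.instMeasurableSpace :=
    measurable_snd.comap_le
  set h : ℝ × E → ℝ := μ[(Prod.fst : ℝ × E → ℝ) | MeasurableSpace.comap Prod.snd mE] with hh
  have hmeas : Measurable[MeasurableSpace.comap (Prod.snd : ℝ × E → E) mE] h :=
    stronglyMeasurable_condExp.measurable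
  have hmeas0 : Measurable h := hmeas.mono hm le_rfl
  have hfst_int : Integrable (Prod.fst : ℝ × E → ℝ) μ := by
    rw [hμ, integrable_map_measure measurable_fst.aestronglyMeasurable hWae]
    exact hY.integrable one_le_two
  have hWm : @Measurable Ω (ℝ × E) (MeasurableSpace.comap Z mE)
      (MeasurableSpace.comap (Prod.snd : ℝ × E → E) mE) W := by
    rw [measurable_iff_comap_le, MeasurableSpace.comap_comp]
    exact le_of_eq rfl
  have hcomp_meas : Measurable[MeasurableSpace.comap Z mE] (h ∘ W) := hmeas.comp hWm
  have hint : Integrable (h ∘ W) P := by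
    rw [← integrable_map_measure (stronglyMeasurable_condExp.mono hm).aestronglyMeasurable hWae]
    exact integrable_condExp
  have hae : h ∘ W =ᵐ[P] P[Y | MeasurableSpace.comap Z mE] := by
    refine ae_eq_condExp_of_forall_setIntegral_eq hZ.comap_le (hY.integrable one_le_two)
      (fun s _ _ => hint.integrableOn) ?_
      (hcomp_meas.stronglyMeasurable.aestronglyMeasurable )
    rintro s ⟨A, hA, rfl⟩ _
    have e1 : ∫ x in Z ⁻¹' A, (h ∘ W) x ∂P = ∫ y in Prod.snd ⁻¹' A, h y ∂μ := by
      rw [hμ, setIntegral_map (measurable_snd hA)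
        (stronglyMeasurable_condExp.mono hm).aestronglyMeasurable hWae]
      rfl
    have e2 : ∫ y in Prod.snd ⁻¹' A, h y ∂μ = ∫ y in Prod.snd ⁻¹' A, y.1 ∂μ :=
      setIntegral_condExp hm hfst_int ⟨A, hA, rfl⟩
    have e3 : ∫ y in Prod.snd ⁻¹' A, y.1 ∂μ = ∫ x in Z ⁻¹' A, Y x ∂P := by
      rw [hμ, setIntegral_map (measurable_snd hA) measurable_fst.aestronglyMeasurable hWae]
      rfl
    rw [e1, e2, e3]
  have hid : IdentDistrib (h ∘ W) h P μ :=
    ⟨hmeas0.comp_aemeasurable hWae, hmeas0.aemeasurable,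
      by rw [hμ, ← AEMeasurable.map_map_of_aemeasurable hmeas0.aemeasurable hWae]⟩
  calc variance (P[Y | MeasurableSpace.comap Z mE]) P = variance (h ∘ W) P :=
        my_variance_congr hae.symm
    _ = variance h μ := hid.variance_eq

lemma variance_condexp_comap_congr {Ω E : Type*} {mΩ : MeasurableSpace Ω}
    {mE : MeasurableSpace E} {P : Measure Ω} [IsProbabilityMeasure P]
    {Y Y' : Ω → ℝ} {Z Z' : Ω → E}
    (hY : MemLp Y 2 P) (hY' : MemLp Y' 2 P) (hZ : Measurable Z) (hZ' : Measurable Z')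
    (hid : IdentDistrib (fun ω => (Y ω, Z ω)) (fun ω => (Y' ω, Z' ω)) P P) :
    variance (P[Y | MeasurableSpace.comap Z mE]) P
      = variance (P[Y' | MeasurableSpace.comap Z' mE]) P := by
  rw [variance_condexp_comap_eq hY hZ, variance_condexp_comap_eq hY' hZ', hid.map_eq]

end Aux

/-- **Temporal convergence of the Sobol index for a stationary system.** If for every `t` the
joint law of `(Y_{t+1}, (X_1, …, X_{t+1}))` equals that of `(Y_t, (X_0, …, X_t))`, with each `Y_t`
square-integrable, then `V_t = Var (E[Y_t | σ(X_0, …, X_t)])` is nondecreasing, bounded above by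
`Var Y_0`, and converges to `⨆ K, V_K`; consequently, if `Var Y_0 ≠ 0`, the
projection-on-the-past sensitivity index `Sˣ_t = V_t / Var Y_t` converges to
`Sˣ_∞ = ⨆ K, Sˣ_K`. -/
theorem stmt_8 {Ω : Type*} [MeasurableSpace Ω] {P : Measure Ω} [IsProbabilityMeasure P]
    (X Y : ℕ → Ω → ℝ)
    (hX : ∀ t, Measurable (X t))
    (hY2 : ∀ t, MemLp (Y t) 2 P)
    (hstat : ∀ t : ℕ,
      IdentDistrib (fun ω => (Y (t + 1) ω, fun i : Fin (t + 1) => X (i.val + 1) ω))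
        (fun ω => (Y t ω, fun i : Fin (t + 1) => X i ω)) P P)
    (V : ℕ → ℝ)
    (hV : ∀ t, V t =
      variance
        (P[Y t | MeasurableSpace.comap (fun ω => fun i : Fin (t + 1) => X i.val ω) inferInstance]) P) :
    Monotone V ∧ (∀ t, V t ≤ variance (Y 0) P) ∧
      Tendsto V atTop (nhds (⨆ K, V K)) ∧
      (variance (Y 0) P ≠ 0 →
        Tendsto (fun t => V t / variance (Y t) P) atTop
          (nhds (⨆ K, V K / variance (Y K) P))) := by
  have hZmeas : ∀ t, Measurable (fun ω => fun i : Fin (t + 1) => X i.val ω) :=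
    fun t => measurable_pi_lambda _ fun i => hX i.val
  have hZ'meas : ∀ t, Measurable (fun ω => fun i : Fin (t + 1) => X (i.val + 1) ω) :=
    fun t => measurable_pi_lambda _ fun i => hX (i.val + 1)
  -- variance of Y t is constant
  have hVareq : ∀ t, variance (Y t) P = variance (Y 0) P := by
    intro t
    induction t with
    | zero => rfl
    | succ t ih =>
      have : IdentDistrib (Y (t + 1)) (Y t) P P := by
        have := (hstat t).comp (measurable_fst : Measurable (Prod.fst :
          ℝ × (Fin (t + 1) → ℝ) → ℝ))
        exact this
      exact this.variance_eq.trans ih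
  -- one step monotonicity
  have hstep : ∀ t, V t ≤ V (t + 1) := by
    intro t
    have h1 : variance (P[Y (t + 1) |
        MeasurableSpace.comap (fun ω => fun i : Fin (t + 1) => X (i.val + 1) ω) inferInstance]) P
        = V t := by
      rw [hV t]
      exact variance_condexp_comap_congr (hY2 (t + 1)) (hY2 t) (hZ'meas t) (hZmeas t) (hstat t)
    have hπ : Measurable (fun (v : Fin (t + 2) → ℝ) => fun i : Fin (t + 1) => v i.succ) :=
      measurable_pi_lambda _ fun i => measurable_pi_apply _
    have hcomp : (fun ω => fun i : Fin (t + 1) => X (i.val + 1) ω)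
        = (fun (v : Fin (t + 2) → ℝ) => fun i : Fin (t + 1) => v i.succ)
          ∘ (fun ω => fun i : Fin (t + 2) => X i.val ω) := rfl
    have hle : MeasurableSpace.comap (fun ω => fun i : Fin (t + 1) => X (i.val + 1) ω)
          inferInstance
        ≤ MeasurableSpace.comap (fun ω => fun i : Fin (t + 2) => X i.val ω) inferInstance := by
      rw [hcomp, ← MeasurableSpace.comap_comp]
      exact MeasurableSpace.comap_mono hπ.comap_le
    calc V t = variance (P[Y (t + 1) |
          MeasurableSpace.comap (fun ω => fun i : Fin (t + 1) => X (i.val + 1) ω) inferInstance]) P :=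
          h1.symm
      _ ≤ variance (P[Y (t + 1) |
          MeasurableSpace.comap (fun ω => fun i : Fin (t + 2) => X i.val ω) inferInstance]) P :=
          my_variance_condexp_mono hle (hZmeas (t + 1)).comap_le (hY2 (t + 1))
      _ = V (t + 1) := (hV (t + 1)).symm
  have hmono : Monotone V := monotone_nat_of_le_succ hstep
  have hbound : ∀ t, V t ≤ variance (Y 0) P := by
    intro t
    rw [hV t, ← hVareq t]
    exact my_variance_condexp_le (hZmeas t).comap_le (hY2 t)
  have hbdd : BddAbove (Set.range V) := by
    refine ⟨variance (Y 0) P, ?_⟩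
    rintro x ⟨t, rfl⟩
    exact hbound t
  have htend : Tendsto V atTop (nhds (⨆ K, V K)) := tendsto_atTop_ciSup hmono hbdd
  refine ⟨hmono, hbound, htend, ?_⟩
  intro hne
  have hc : 0 < variance (Y 0) P := (variance_nonneg _ _).lt_of_ne (Ne.symm hne)
  have hfun : (fun t => V t / variance (Y t) P) = fun t => V t / variance (Y 0) P :=
    funext fun t => by rw [hVareq t]
  rw [hfun]
  have hmap := Monotone.map_ciSup_of_continuousAt
    (f := fun x : ℝ => x / variance (Y 0) P) (g := V)
    ((continuous_id.div_const _).continuousAt)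
    (fun a b hab => by dsimp only; gcongr) hbdd
  rw [← hmap]
  exact htend.div_const _
end
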